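/- Let p be a prime and let (Λ_i)_{i≥1} be a sequence of full-rank ℤ_p-lattices in an n-dimensional ℚ_p-vector space such that (i) Λ_{i+1} ⊂ Λ_i, (ii) Λ_i/Λ_{i+1} ≅ ℤ/pℤ, and (iii) for every x ∈ Λ_i \ Λ_{i+1} one has px ∈ Λ_{i+1} \ Λ_{i+2}. Then for every i ≥ 1 the quotient group Λ_1/Λ_i is cyclic of order p^{i-1}, i.e. Λ_1/Λ_i ≅ ℤ/p^{i-1}ℤ. -/

import Mathlib

/-!
**Statement 9.**  Let `p` be a prime and `(Λ_i)_{i ≥ 1}` a sequence of full-rank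
`ℤ_p`-lattices in an `n`-dimensional `ℚ_p`-vector space such that
(i) `Λ_{i+1} ⊂ Λ_i`, (ii) `Λ_i/Λ_{i+1} ≅ ℤ/pℤ`, and (iii) for every
`x ∈ Λ_i \ Λ_{i+1}` one has `p·x ∈ Λ_{i+1} \ Λ_{i+2}`.  Then for every `i ≥ 1` the
quotient group `Λ_1/Λ_i` is cyclic of order `p^{i-1}`, i.e. `Λ_1/Λ_i ≅ ℤ/p^{i-1}ℤ`.
-/

theorem lattice_chain_quotient_cyclic
    (p : ℕ) [Fact p.Prime] (n : ℕ)
    (V : Type) [AddCommGroup V] [Module ℚ_[p] V] [Module ℤ_[p] V]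
    [IsScalarTower ℤ_[p] ℚ_[p] V]
    (hdim : Module.finrank ℚ_[p] V = n)
    (Λ : ℕ → Submodule ℤ_[p] V)
    (hfree : ∀ i, 1 ≤ i → Module.Free ℤ_[p] (Λ i))
    (hrank : ∀ i, 1 ≤ i → Module.finrank ℤ_[p] (Λ i) = n)
    (hsub : ∀ i, 1 ≤ i → Λ (i + 1) < Λ i)
    (hquot : ∀ i, 1 ≤ i →
      Nonempty ((↥(Λ i) ⧸ (Λ (i + 1)).comap (Λ i).subtype) ≃+ ZMod p))
    (hmul : ∀ i, 1 ≤ i → ∀ x ∈ Λ i, x ∉ Λ (i + 1) →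
      (p : ℤ_[p]) • x ∈ Λ (i + 1) ∧ (p : ℤ_[p]) • x ∉ Λ (i + 2)) :
    ∀ i, 1 ≤ i →
      Nonempty ((↥(Λ 1) ⧸ (Λ i).comap (Λ 1).subtype) ≃+ ZMod (p ^ (i - 1))) := by
  have hp : p.Prime := Fact.out
  -- the chain is decreasing
  have hchain : ∀ k, 1 ≤ k → ∀ l, k ≤ l → Λ l ≤ Λ k := by
    intro k hk l hl
    obtain ⟨d, rfl⟩ := Nat.exists_eq_add_of_le hl
    induction d with
    | zero => exact le_rfl
    | succ d ih =>
        exact le_trans (by exact_mod_cast (hsub (k + d) (by omega)).le) (ih (by omega))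
  -- pick x ∈ Λ 1 \ Λ 2
  obtain ⟨x, hx1, hx2⟩ := SetLike.exists_of_lt (hsub 1 le_rfl)
  -- powers of p applied to x
  have hpow : ∀ k : ℕ, ((p : ℤ_[p]) ^ k) • x ∈ Λ (k + 1) ∧ ((p : ℤ_[p]) ^ k) • x ∉ Λ (k + 2) := by
    intro k
    induction k with
    | zero => simpa using ⟨hx1, hx2⟩
    | succ k ih =>
        have h := hmul (k + 1) (by omega) _ ih.1 ih.2
        rw [pow_succ, mul_comm, mul_smul] at *
        exact h
  -- ℤ-smul version
  have hpowZ : ∀ k : ℕ, ((p : ℤ) ^ k) • x ∈ Λ (k + 1) ∧ ((p : ℤ) ^ k) • x ∉ Λ (k + 2) := by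
    intro k
    have : ((p : ℤ) ^ k) • x = ((p : ℤ_[p]) ^ k) • x := by
      rw [← Int.cast_smul_eq_zsmul ℤ_[p]]; push_cast; ring_nf
    rw [this]; exact hpow k
  -- generation: every element of Λ 1 is an integer multiple of x modulo Λ (j+1)
  have hgen : ∀ j : ℕ, ∀ y ∈ Λ 1, ∃ m : ℤ, y - m • x ∈ Λ (j + 1) := by
    intro j
    induction j with
    | zero => intro y hy; exact ⟨0, by simpa using hy⟩
    | succ j ih =>
        intro y hy
        obtain ⟨m, hm⟩ := ih y hy
        obtain ⟨e⟩ := hquot (j + 1) (by omega)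
        set N := (Λ (j + 2)).comap (Λ (j + 1)).subtype with hN
        have hw1 : ((p : ℤ) ^ j) • x ∈ Λ (j + 1) := (hpowZ j).1
        have hw2 : ((p : ℤ) ^ j) • x ∉ Λ (j + 2) := (hpowZ j).2
        set wq : ↥(Λ (j + 1)) ⧸ N := Submodule.Quotient.mk ⟨_, hw1⟩ with hwq
        set zq : ↥(Λ (j + 1)) ⧸ N := Submodule.Quotient.mk ⟨_, hm⟩ with hzq
        have hwq0 : wq ≠ 0 := by
          rw [hwq, Ne, Submodule.Quotient.mk_eq_zero]
          exact hw2
        have ha : e wq ≠ 0 := fun h => hwq0 (by simpa using e.injective (by simpa using h))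
        obtain ⟨c, hc⟩ := ZMod.intCast_surjective (e zq * (e wq)⁻¹)
        have hcz : c • wq = zq := by
          apply e.injective
          rw [map_zsmul, zsmul_eq_mul, hc, mul_assoc, inv_mul_cancel₀ ha, mul_one]
        have hmem : (y - m • x) - (c * (p : ℤ) ^ j) • x ∈ Λ (j + 2) := by
          have h1 : (Submodule.Quotient.mk (⟨y - m • x, hm⟩ : ↥(Λ (j + 1))) : ↥(Λ (j + 1)) ⧸ N)
              = Submodule.Quotient.mk (c • (⟨_, hw1⟩ : ↥(Λ (j + 1)))) := by
            rw [Submodule.Quotient.mk_smul N c]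
            exact hcz.symm
          have h2 := (Submodule.Quotient.eq N).mp h1
          rw [hN, Submodule.mem_comap] at h2
          have h3 : ((⟨y - m • x, hm⟩ - c • (⟨_, hw1⟩ : ↥(Λ (j + 1))) : ↥(Λ (j + 1))) : V)
              = (y - m • x) - (c * (p : ℤ) ^ j) • x := by
            push_cast [mul_smul]
            rfl
          rwa [Submodule.subtype_apply, h3] at h2
        exact ⟨m + c * (p : ℤ) ^ j, by
          have : y - (m + c * (p : ℤ) ^ j) • x = (y - m • x) - (c * (p : ℤ) ^ j) • x := by
            rw [add_smul]; abel
          rw [this]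
          exact hchain (j + 2) (by omega) (j + 2) le_rfl hmem⟩
  -- order: m • x ∈ Λ (j+1) ↔ p ^ j ∣ m
  have hord : ∀ j : ℕ, ∀ m : ℤ, m • x ∈ Λ (j + 1) ↔ (p : ℤ) ^ j ∣ m := by
    intro j m
    constructor
    · intro hmx
      by_contra hdvd
      have hm0 : m ≠ 0 := fun h => hdvd (h ▸ dvd_zero _)
      have hfin : FiniteMultiplicity (p : ℤ) m :=
        Int.finiteMultiplicity_iff.mpr ⟨by exact_mod_cast hp.ne_one, hm0⟩
      obtain ⟨u, h1, h2⟩ := hfin.exists_eq_pow_mul_and_not_dvd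
      set a := multiplicity (p : ℤ) m with haa
      have haj : a < j := by
        by_contra hle
        exact hdvd (dvd_trans (pow_dvd_pow _ (by omega)) (h1 ▸ Dvd.intro u rfl))
      -- coprimality and Bezout
      have hpz : Prime (p : ℤ) := Nat.prime_iff_prime_int.mp hp
      have hcop : IsCoprime ((p : ℤ) ^ (j - a)) u :=
        IsCoprime.pow_left (hpz.coprime_iff_not_dvd.mpr h2)
      obtain ⟨v, w, hvw⟩ := hcop
      have hx' : ((p : ℤ) ^ a) • x ∈ Λ (j + 1) := by
        have h3 : (v * (p : ℤ) ^ (j - a) + w * u) • (((p : ℤ) ^ a) • x)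
            = ((p : ℤ) ^ a) • x := by rw [hvw, one_smul]
        rw [← h3, add_smul, mul_smul, mul_smul]
        apply Submodule.add_mem
        · apply Submodule.smul_of_tower_mem
          rw [smul_smul, ← pow_add]
          have hja : j - a + a = j := by omega
          rw [hja]; exact (hpowZ j).1
        · apply Submodule.smul_of_tower_mem
          rw [smul_smul, mul_comm, ← h1]
          exact hmx
      exact (hpowZ a).2 (hchain (a + 2) (by omega) (j + 1) (by omega) hx')
    · rintro ⟨c, rfl⟩
      have : ((p : ℤ) ^ j * c) • x = c • (((p : ℤ) ^ j) • x) := by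
        rw [← mul_smul, mul_comm]
      rw [this]
      exact Submodule.smul_of_tower_mem _ c (hpowZ j).1
  -- assemble
  intro i hi
  obtain ⟨j, rfl⟩ : ∃ j, i = j + 1 := ⟨i - 1, by omega⟩
  set xq : ↥(Λ 1) ⧸ (Λ (j + 1)).comap (Λ 1).subtype :=
    Submodule.Quotient.mk ⟨x, hx1⟩ with hxq
  set f : ℤ →+ _ := zmultiplesHom _ xq with hf
  have hfm : ∀ m : ℤ, f m = Submodule.Quotient.mk (m • (⟨x, hx1⟩ : ↥(Λ 1))) := by
    intro m
    rw [hf, zmultiplesHom_apply, hxq]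
    exact (map_zsmul (Submodule.mkQ _) m _).symm
  have hsurj : Function.Surjective f := by
    intro q
    obtain ⟨⟨y, hy⟩, rfl⟩ := Submodule.Quotient.mk_surjective _ q
    obtain ⟨m, hm⟩ := hgen j y hy
    refine ⟨m, ?_⟩
    rw [hfm, Submodule.Quotient.eq]
    simpa using (Submodule.neg_mem _ hm)
  have hker : f.ker = AddSubgroup.zmultiples (((p ^ j : ℕ) : ℤ)) := by
    ext m
    rw [AddMonoidHom.mem_ker, Int.mem_zmultiples_iff, hfm, Submodule.Quotient.mk_eq_zero]
    push_cast
    simpa using hord j m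
  have e1 := (QuotientAddGroup.quotientKerEquivOfSurjective f hsurj).symm
  have e2 := QuotientAddGroup.quotientAddEquivOfEq hker
  have e3 := Int.quotientZMultiplesNatEquivZMod (p ^ j)
  simpa using ⟨(e1.trans e2).trans e3⟩
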